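/- With the stepsize choice η = (1/σ²)·(1 - ((s²/n)/(σ²(θ*)² + s²/n))^{1/k}) for a fixed integer k ≥ 1, the minimum value of U(t) = σ²(θ*)²(1 - ησ²)^{2t} + (s²/n)(1 - (1 - ησ²)^t)² over t is attained at t = k and equals (s²/n)·σ²(θ*)² / (s²/n + σ²(θ*)²), independently of k. -/

import Mathlib

open Real

theorem stmt_3 (σ θstar s2 n : ℝ) (k : ℕ) (hσ : 0 < σ) (hθ : θstar ≠ 0)
    (hs2 : 0 < s2) (hn : 1 ≤ n) (hk : 1 ≤ k)
    (η : ℝ)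
    (hη : η = (1 / σ ^ 2) *
      (1 - ((s2 / n) / (σ ^ 2 * θstar ^ 2 + s2 / n)) ^ ((1 : ℝ) / k)))
    (U : ℝ → ℝ)
    (hU : ∀ t : ℝ, U t =
      σ ^ 2 * θstar ^ 2 * (1 - η * σ ^ 2) ^ (2 * t) +
        (s2 / n) * (1 - (1 - η * σ ^ 2) ^ t) ^ 2) :
    (∀ t : ℝ, 0 ≤ t → U (k : ℝ) ≤ U t) ∧
      U (k : ℝ) = (s2 / n) * (σ ^ 2 * θstar ^ 2) / (s2 / n + σ ^ 2 * θstar ^ 2) := by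
  have hσ2 : (0:ℝ) < σ ^ 2 := by positivity
  have hn0 : (0:ℝ) < n := lt_of_lt_of_le one_pos hn
  have hθ2 : (0:ℝ) < θstar ^ 2 := by positivity
  set a := σ ^ 2 * θstar ^ 2 with ha_def
  have ha : 0 < a := by positivity
  set b := s2 / n with hb_def
  have hb : 0 < b := div_pos hs2 hn0
  have hab : 0 < a + b := by linarith
  set c := b / (a + b) with hc_def
  have hc0 : 0 < c := div_pos hb hab
  have hcb : c * (a + b) = b := div_mul_cancel₀ b hab.ne'
  set r := c ^ ((1:ℝ) / (k:ℝ)) with hr_def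
  have hr0 : 0 < r := Real.rpow_pos_of_pos hc0 _
  have hk0 : (k:ℝ) ≠ 0 := by exact_mod_cast Nat.pos_of_ne_zero (by omega) |>.ne'
  have hrk : r ^ ((k:ℝ)) = c := by
    rw [hr_def, ← Real.rpow_mul hc0.le, one_div, inv_mul_cancel₀ hk0, Real.rpow_one]
  have hbase : 1 - η * σ ^ 2 = r := by
    rw [hη]; field_simp; ring
  have hsq : ∀ t : ℝ, r ^ (2 * t) = (r ^ t) ^ 2 := by
    intro t
    rw [mul_comm, Real.rpow_mul hr0.le,
      show ((2:ℝ)) = ((2:ℕ):ℝ) by norm_num, Real.rpow_natCast]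
  have hU' : ∀ t : ℝ, U t = a * (r ^ t) ^ 2 + b * (1 - r ^ t) ^ 2 := by
    intro t
    rw [hU t, hbase, hsq]
  have hUk : U (k:ℝ) = b * a / (b + a) := by
    rw [hU' (k:ℝ), hrk, hc_def]
    field_simp
    ring
  constructor
  · intro t ht
    rw [hUk, hU' t]
    set x := r ^ t with hx_def
    have hx : 0 < x := Real.rpow_pos_of_pos hr0 t
    rw [div_le_iff₀ (by linarith)]
    nlinarith [sq_nonneg ((a + b) * x - b)]
  · exact hUk
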